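/- Let A = {H₁,…,Hₙ} be a generic essential arrangement in K^k (every set of at most k of the forms α_i is linearly independent). Then for every S ⊆ {1,…,n}, dim D_S = min{n, n + k − |S|}. In particular D_S is a hyperplane in K^n if and only if |S| = k + 1. -/

import Mathlib

open Module LinearMap

section Aux

variable {K : Type*} [Field K] {k : ℕ}

/-- Dot products with a family of vectors, as a linear map into a pi type. -/
def dotPi {ι : Type*} [Fintype ι] (β : ι → (Fin k → K)) :
    (Fin k → K) →ₗ[K] (ι → K) where
  toFun x := fun i => ∑ j, β i j * x j
  map_add' x y := by
    funext i; simp [mul_add, Finset.sum_add_distrib]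
  map_smul' c x := by
    funext i; simp [Finset.mul_sum, mul_left_comm]

lemma dotPi_apply {ι : Type*} [Fintype ι] (β : ι → (Fin k → K)) (x : Fin k → K) (i : ι) :
    dotPi β x i = ∑ j, β i j * x j := rfl

/-- The dot product against representatives of a linear functional recovers it. -/
lemma dot_single (f : (Fin k → K) →ₗ[K] K) (v : Fin k → K) :
    ∑ j, v j * f (Pi.single j 1) = f v := by
  conv_rhs => rw [← Finset.univ_sum_single v]
  rw [map_sum]
  refine Finset.sum_congr rfl fun j _ => ?_
  rw [← smul_eq_mul, ← f.map_smul]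
  congr 1
  funext l
  by_cases h : l = j <;> simp [Pi.single_apply, h]

lemma dotPi_surjective {ι : Type*} [Fintype ι] {β : ι → (Fin k → K)}
    (hli : LinearIndependent K β) : Function.Surjective (dotPi β) := by
  intro u
  set p := Submodule.span K (Set.range β) with hp
  let b : Basis ι K p := Basis.span hli
  obtain ⟨f, hf⟩ := LinearMap.exists_extend (b.constr K u)
  refine ⟨fun j => f (Pi.single j 1), ?_⟩
  funext i
  rw [dotPi_apply, dot_single]
  rw [show β i = (b i : Fin k → K) by rw [Basis.span_apply hli i]]
  exact (LinearMap.congr_fun hf (b i)).trans (b.constr_basis K u i)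

/-- A submodule product is equivalent to the product of submodules. -/
def subProdEquiv {M N : Type*} [AddCommGroup M] [AddCommGroup N] [Module K M] [Module K N]
    (p : Submodule K M) (q : Submodule K N) : (p.prod q) ≃ₗ[K] (p × q) where
  toFun x := (⟨x.1.1, x.2.1⟩, ⟨x.1.2, x.2.2⟩)
  invFun y := ⟨(y.1.1, y.2.1), ⟨y.1.2, y.2.2⟩⟩
  map_add' _ _ := rfl
  map_smul' _ _ := rfl
  left_inv _ := rfl
  right_inv _ := rfl

end Aux

/-- For a generic essential arrangement of `n` hyperplanes in `K^k`
(any at most `k` of the normals are linearly independent), `dim D_S = min{n, n+k−|S|}`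
for every `S ⊆ [n]`; in particular `D_S` is a hyperplane iff `|S| = k+1`. -/
theorem dS_dim_generic {K : Type*} [Field K] {n k : ℕ}
    (hk : 1 ≤ k) (hkn : k ≤ n)
    (α : Fin n → (Fin k → K))
    (hgen : ∀ S : Finset (Fin n), S.card ≤ k →
      LinearIndependent K (fun i : S => α i)) :
    ∀ S : Finset (Fin n),
      (∃ V : Submodule K (Fin n → K),
        (V : Set (Fin n → K)) =
          {t | ∃ x : Fin k → K, ∀ i ∈ S, ∑ j, α i j * x j = t i}) ∧
      (∀ V : Submodule K (Fin n → K),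
        (V : Set (Fin n → K)) =
          {t | ∃ x : Fin k → K, ∀ i ∈ S, ∑ j, α i j * x j = t i} →
        Module.finrank K V = min n (n + k - S.card) ∧
        (Module.finrank K V + 1 = n ↔ S.card = k + 1)) := by
  intro S
  classical
  -- the linearized parametrization map
  let φ : ((Fin k → K) × (Fin n → K)) →ₗ[K] (Fin n → K) :=
  { toFun := fun p i => if i ∈ S then ∑ j, α i j * p.1 j else p.2 i
    map_add' := by
      intro p q; funext i
      by_cases h : i ∈ S <;> simp [h, mul_add, Finset.sum_add_distrib]
    map_smul' := by
      intro c p; funext i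
      by_cases h : i ∈ S <;> simp [h, Finset.mul_sum, mul_left_comm] }
  have hφ : ∀ p i, φ p i = if i ∈ S then ∑ j, α i j * p.1 j else p.2 i := fun _ _ => rfl
  have hrange : ((LinearMap.range φ : Submodule K (Fin n → K)) : Set (Fin n → K)) =
      {t | ∃ x : Fin k → K, ∀ i ∈ S, ∑ j, α i j * x j = t i} := by
    ext t
    constructor
    · rintro ⟨p, rfl⟩
      exact ⟨p.1, fun i hi => by rw [hφ, if_pos hi]⟩
    · rintro ⟨x, hx⟩
      refine ⟨(x, t), ?_⟩
      funext i
      rw [hφ]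
      by_cases hi : i ∈ S
      · rw [if_pos hi]; exact hx i hi
      · rw [if_neg hi]
  -- the extension-by-zero map
  let e : (↥S → K) →ₗ[K] (Fin n → K) :=
  { toFun := fun z i => if h : i ∈ S then z ⟨i, h⟩ else 0
    map_add' := by intro z w; funext i; by_cases h : i ∈ S <;> simp [h]
    map_smul' := by intro c z; funext i; by_cases h : i ∈ S <;> simp [h] }
  have he : ∀ (z : ↥S → K) i, e z i = if h : i ∈ S then z ⟨i, h⟩ else 0 := fun _ _ => rfl
  have heinj : Function.Injective e := by
    intro z w h
    funext i
    have := congrFun h i.1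
    rwa [he, he, dif_pos i.2, dif_pos i.2, Subtype.coe_eta] at this
  have hemem : ∀ y : Fin n → K, y ∈ LinearMap.range e ↔ ∀ i ∉ S, y i = 0 := by
    intro y
    constructor
    · rintro ⟨z, rfl⟩ i hi
      rw [he, dif_neg hi]
    · intro hy
      refine ⟨fun i => y i.1, ?_⟩
      funext i
      rw [he]
      by_cases h : i ∈ S
      · rw [dif_pos h]
      · rw [dif_neg h]; exact (hy i h).symm
  -- kernel of φ is a product
  set πS := dotPi (fun i : S => α i) with hπS
  have hker : LinearMap.ker φ = (LinearMap.ker πS).prod (LinearMap.range e) := by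
    ext p
    simp only [LinearMap.mem_ker, Submodule.mem_prod, hemem]
    constructor
    · intro h
      refine ⟨?_, ?_⟩
      · funext i
        have := congrFun h i.1
        rwa [hφ, if_pos i.2] at this
      · intro i hi
        have := congrFun h i
        rwa [hφ, if_neg hi] at this
    · rintro ⟨h1, h2⟩
      funext i
      rw [hφ]
      by_cases h : i ∈ S
      · rw [if_pos h]
        exact congrFun h1 (⟨i, h⟩ : S)
      · rw [if_neg h]
        exact h2 i h
  -- the smaller set T
  set m := min S.card k with hm
  obtain ⟨T, hTS, hT⟩ := S.exists_subset_card_eq (n := m) (min_le_left _ _)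
  set πT := dotPi (fun i : T => α i) with hπT
  have hTk : T.card ≤ k := by omega
  have hliT : LinearIndependent K (fun i : T => α i) := hgen T hTk
  -- the two kernels agree
  have hkk : LinearMap.ker πS = LinearMap.ker πT := by
    ext x
    simp only [LinearMap.mem_ker]
    constructor
    · intro h
      funext i
      have := congrFun h (⟨i.1, hTS i.2⟩ : S)
      exact this
    · intro h
      by_cases hc : S.card ≤ k
      · have hTSe : T = S := Finset.eq_of_subset_of_card_le hTS (by omega)
        subst hTSe
        exact h
      · have hTck : T.card = k := by omega
        have hspan : Submodule.span K (Set.range fun i : T => α i) = ⊤ := by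
          apply hliT.span_eq_top_of_card_eq_finrank'
          rw [Fintype.card_coe, hTck, Module.finrank_fintype_fun_eq_card, Fintype.card_fin]
        -- dot with x as a functional
        let g : (Fin k → K) →ₗ[K] K :=
        { toFun := fun v => ∑ j, v j * x j
          map_add' := by intro v w; simp [add_mul, Finset.sum_add_distrib]
          map_smul' := by intro c v; simp [Finset.mul_sum, mul_assoc] }
        have hg : Submodule.span K (Set.range fun i : T => α i) ≤ LinearMap.ker g := by
          rw [Submodule.span_le]
          rintro _ ⟨i, rfl⟩
          exact congrFun h i
        funext i
        have : α i.1 ∈ LinearMap.ker g := hg (hspan ▸ Submodule.mem_top)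
        exact this
  -- finrank computations
  have hd1 : Module.finrank K (LinearMap.range πT) + Module.finrank K (LinearMap.ker πT) = k := by
    have := LinearMap.finrank_range_add_finrank_ker πT
    rwa [Module.finrank_fintype_fun_eq_card, Fintype.card_fin] at this
  have hd2 : Module.finrank K (LinearMap.range πT) = m := by
    rw [LinearMap.range_eq_top.mpr (dotPi_surjective hliT), finrank_top,
      Module.finrank_fintype_fun_eq_card, Fintype.card_coe, hT]
  have hd3 : Module.finrank K (LinearMap.range e) = S.card := by
    rw [LinearMap.finrank_range_of_inj heinj, Module.finrank_fintype_fun_eq_card,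
      Fintype.card_coe]
  have hd4 : Module.finrank K (LinearMap.ker φ) =
      Module.finrank K (LinearMap.ker πS) + Module.finrank K (LinearMap.range e) := by
    rw [hker, (subProdEquiv _ _).finrank_eq, Module.finrank_prod]
  have hd5 : Module.finrank K (LinearMap.range φ) + Module.finrank K (LinearMap.ker φ) =
      k + n := by
    have := LinearMap.finrank_range_add_finrank_ker φ
    rwa [Module.finrank_prod, Module.finrank_fintype_fun_eq_card,
      Module.finrank_fintype_fun_eq_card, Fintype.card_fin, Fintype.card_fin] at this
  have hSn : S.card ≤ n := by
    have := S.card_le_univ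
    rwa [Fintype.card_fin] at this
  have hrg : Module.finrank K (LinearMap.range φ) = min n (n + k - S.card) := by
    rw [hkk] at hd4
    omega
  refine ⟨⟨LinearMap.range φ, hrange⟩, ?_⟩
  intro V hV
  have hVeq : V = LinearMap.range φ := SetLike.coe_injective (hV.trans hrange.symm)
  subst hVeq
  exact ⟨hrg, by omega⟩
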